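/- Let ι be a linearly ordered set whose order is well-founded (every nonempty subset has a least element). For each i ∈ ι let Λ_i be a linearly ordered abelian group and H_i a group with an orientation-preserving affine action on Λ_i. Equip Λ = ∏_{i∈ι} Λ_i with the lexicographic order: x < y iff x_{i₀} < y_{i₀} where i₀ is the least index at which x and y differ. Then the componentwise action of H = ∏_{i∈ι} H_i on Λ is an orientation-preserving affine action; moreover this action is free if each of the given actions is free, every element of H acts rigidly if every element of each H_i acts rigidly, and the action of H is essentially free if each of the given actions is essentially free. -/

import Mathlib

/-- An orientation-preserving affine automorphism of a linearly ordered abelian group `Λ`: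
an order-preserving bijection `g` of `Λ` admitting an order-preserving group automorphism
`dilation` (the dilation factor) with `g x - g y = dilation (x - y)` for all `x, y`. -/
structure OPAffineAut (Λ : Type*) [AddCommGroup Λ] [LinearOrder Λ] [IsOrderedAddMonoid Λ] extends Λ ≃ Λ where
  strictMono' : StrictMono toEquiv
  dilation : Λ ≃+ Λ
  dilation_strictMono : StrictMono dilation
  affine : ∀ x y : Λ, toEquiv x - toEquiv y = dilation (x - y)

namespace OPAffineAut

variable {Λ : Type*} [AddCommGroup Λ] [LinearOrder Λ] [IsOrderedAddMonoid Λ]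

instance : CoeFun (OPAffineAut Λ) (fun _ => Λ → Λ) := ⟨fun f => f.toEquiv⟩

theorem ext' {f g : OPAffineAut Λ} (h : ∀ x, f x = g x) : f = g := by
  have he : f.toEquiv = g.toEquiv := Equiv.ext h
  have hd : f.dilation = g.dilation := AddEquiv.ext fun x => by
    have hf := f.affine x 0
    have hg := g.affine x 0
    rw [sub_zero] at hf hg
    rw [← hf, ← hg]
    show f x - f 0 = g x - g 0
    rw [h x, h 0]
  cases f; cases g
  cases he; cases hd
  rfl

instance : Group (OPAffineAut Λ) where
  one :=
    { toEquiv := Equiv.refl Λ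
      strictMono' := strictMono_id
      dilation := AddEquiv.refl Λ
      dilation_strictMono := strictMono_id
      affine := fun _ _ => rfl }
  mul f g :=
    { toEquiv := g.toEquiv.trans f.toEquiv
      strictMono' := f.strictMono'.comp g.strictMono'
      dilation := g.dilation.trans f.dilation
      dilation_strictMono := f.dilation_strictMono.comp g.dilation_strictMono
      affine := fun x y => by
        simp only [Equiv.trans_apply, AddEquiv.trans_apply]
        rw [f.affine, g.affine] }
  inv f :=
    { toEquiv := f.toEquiv.symm
      strictMono' := fun a b hab => f.strictMono'.lt_iff_lt.1 (by
        simpa only [Equiv.apply_symm_apply] using hab)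
      dilation := f.dilation.symm
      dilation_strictMono := fun a b hab => f.dilation_strictMono.lt_iff_lt.1 (by
        simpa only [AddEquiv.apply_symm_apply] using hab)
      affine := fun x y => f.dilation.injective (by
        rw [AddEquiv.apply_symm_apply, ← f.affine, Equiv.apply_symm_apply,
          Equiv.apply_symm_apply]) }
  mul_assoc f g h := ext' fun _ => rfl
  one_mul f := ext' fun _ => rfl
  mul_one f := ext' fun _ => rfl
  inv_mul_cancel f := ext' fun x => f.toEquiv.symm_apply_apply x

@[simp] theorem mul_apply (f g : OPAffineAut Λ) (x : Λ) : (f * g) x = f (g x) := rfl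
@[simp] theorem one_apply (x : Λ) : (1 : OPAffineAut Λ) x = x := rfl
@[simp] theorem inv_apply (f : OPAffineAut Λ) (x : Λ) : f⁻¹ x = f.toEquiv.symm x := rfl

/-- An affine automorphism is *hyperbolic* if it has no fixed point. -/
def Hyperbolic (f : OPAffineAut Λ) : Prop := ∀ x : Λ, f x ≠ x

/-- An affine automorphism is *rigid* if for `ε = ±1`, whenever `f^ε` moves some point up,
it moves every point up. -/
def Rigid (f : OPAffineAut Λ) : Prop :=
  ∀ ε : ℤ, ε = 1 ∨ ε = -1 → (∃ x : Λ, x < (f ^ ε) x) → ∀ y : Λ, y < (f ^ ε) y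

end OPAffineAut

/-- An orientation-preserving affine action (a homomorphism into the group of
orientation-preserving affine automorphisms) is *free* if every nontrivial group element
acts without fixed points. -/
def AffineActionFree {G Λ : Type*} [Group G] [AddCommGroup Λ] [LinearOrder Λ] [IsOrderedAddMonoid Λ]
    (ρ : G →* OPAffineAut Λ) : Prop :=
  ∀ g : G, g ≠ 1 → ∀ x : Λ, ρ g x ≠ x

/-- An orientation-preserving affine action is *essentially free* if every nontrivial group
element acts as a rigid hyperbolic affine automorphism. -/
def AffineActionEssentiallyFree {G Λ : Type*} [Group G] [AddCommGroup Λ] [LinearOrder Λ] [IsOrderedAddMonoid Λ]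
    (ρ : G →* OPAffineAut Λ) : Prop :=
  ∀ g : G, g ≠ 1 → (ρ g).Rigid ∧ (ρ g).Hyperbolic

/-- `G` admits an essentially free orientation-preserving affine action on `Λ`. -/
def HasEssentiallyFreeAffineAction (G : Type*) [Group G] (Λ : Type*)
    [AddCommGroup Λ] [LinearOrder Λ] [IsOrderedAddMonoid Λ] : Prop :=
  ∃ ρ : G →* OPAffineAut Λ, AffineActionEssentiallyFree ρ

section ProductAux

variable {Λ' : Type*} [AddCommGroup Λ'] [LinearOrder Λ'] [IsOrderedAddMonoid Λ']

theorem OPAffineAut.rigid_up {f : OPAffineAut Λ'} (hf : f.Rigid) {a : Λ'} (ha : a < f a) (b : Λ') :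
    b < f b := by
  have := hf 1 (Or.inl rfl) ⟨a, by rwa [zpow_one]⟩ b
  rwa [zpow_one] at this

theorem OPAffineAut.rigid_down {f : OPAffineAut Λ'} (hf : f.Rigid) {a : Λ'} (ha : a < f.toEquiv.symm a)
    (b : Λ') : b < f.toEquiv.symm b := by
  have := hf (-1) (Or.inr rfl) ⟨a, by rwa [zpow_neg_one]⟩ b
  rwa [zpow_neg_one] at this

/-- A rigid automorphism with a fixed point is the identity. -/
theorem OPAffineAut.Rigid.apply_eq {f : OPAffineAut Λ'} (hf : f.Rigid) {z : Λ'}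
    (hz : f z = z) (w : Λ') : f w = w := by
  by_contra hw
  rcases lt_or_gt_of_ne hw with h | h
  · have h' : f w < f.toEquiv.symm (f w) := by
      rw [f.toEquiv.symm_apply_apply]; exact h
    have := OPAffineAut.rigid_down hf h' z
    rw [show f.toEquiv.symm z = z from (f.toEquiv.symm_apply_eq).2 hz.symm] at this
    exact lt_irrefl _ this
  · have := OPAffineAut.rigid_up hf h z
    rw [hz] at this
    exact lt_irrefl _ this

theorem OPAffineAut.one_rigid : (1 : OPAffineAut Λ').Rigid := by
  rintro ε hε ⟨x, hx⟩ y
  rw [one_zpow] at hx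
  exact absurd hx (lt_irrefl x)

variable {ι : Type*} [LinearOrder ι] [WellFoundedLT ι]
  {Λ : ι → Type*} [∀ i, AddCommGroup (Λ i)] [∀ i, LinearOrder (Λ i)]
  [∀ i, IsOrderedAddMonoid (Λ i)]

/-- The componentwise affine automorphism of a lexicographic product. -/
def OPAffineAut.piLex (F : ∀ i, OPAffineAut (Λ i)) : OPAffineAut (Lex (∀ i, Λ i)) where
  toFun x := toLex fun i => F i (ofLex x i)
  invFun x := toLex fun i => (F i).toEquiv.symm (ofLex x i)
  left_inv x := congrArg toLex (funext fun i => (F i).toEquiv.symm_apply_apply (ofLex x i))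
  right_inv x := congrArg toLex (funext fun i => (F i).toEquiv.apply_symm_apply (ofLex x i))
  strictMono' := by
    rintro x y ⟨i, hj, hi⟩
    exact ⟨i, fun j hji => congrArg (F j) (hj j hji), (F i).strictMono' hi⟩
  dilation :=
    { toFun := fun x => toLex fun i => (F i).dilation (ofLex x i)
      invFun := fun x => toLex fun i => (F i).dilation.symm (ofLex x i)
      left_inv := fun x =>
        congrArg toLex (funext fun i => (F i).dilation.symm_apply_apply (ofLex x i))
      right_inv := fun x =>
        congrArg toLex (funext fun i => (F i).dilation.apply_symm_apply (ofLex x i))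
      map_add' := fun a b =>
        congrArg toLex (funext fun i => map_add (F i).dilation (ofLex a i) (ofLex b i)) }
  dilation_strictMono := by
    rintro x y ⟨i, hj, hi⟩
    exact ⟨i, fun j hji => congrArg (F j).dilation (hj j hji), (F i).dilation_strictMono hi⟩
  affine := fun x y =>
    congrArg toLex (funext fun i => (F i).affine (ofLex x i) (ofLex y i))

theorem OPAffineAut.piLex_apply (F : ∀ i, OPAffineAut (Λ i)) (x : Lex (∀ i, Λ i)) (i : ι) :
    ofLex (piLex F x) i = F i (ofLex x i) := rfl

theorem OPAffineAut.piLex_rigid_aux (F : ∀ i, OPAffineAut (Λ i)) (hF : ∀ i, (F i).Rigid)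
    (hx : ∃ x : Lex (∀ i, Λ i), x < OPAffineAut.piLex F x) :
    ∀ y : Lex (∀ i, Λ i), y < OPAffineAut.piLex F y := by
  obtain ⟨x, i, hxj, hxi⟩ := hx
  intro y
  have hiup : ∀ a : Λ i, a < F i a := OPAffineAut.rigid_up (hF i) hxi
  set S : Set ι := {j | F j (ofLex y j) ≠ ofLex y j} with hS
  have hiS : i ∈ S := fun hcon => absurd (hiup (ofLex y i)) (by rw [hcon]; exact lt_irrefl _)
  have hSne : S.Nonempty := ⟨i, hiS⟩
  set j₀ := (wellFounded_lt (α := ι)).min S hSne with hj₀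
  have hj₀S : j₀ ∈ S := (wellFounded_lt (α := ι)).min_mem S hSne
  have hj₀i : j₀ = i := by
    rcases lt_trichotomy j₀ i with hlt | heq | hgt
    · exfalso
      exact hj₀S ((hF j₀).apply_eq (hxj j₀ hlt).symm (ofLex y j₀))
    · exact heq
    · exact absurd hgt ((wellFounded_lt (α := ι)).not_lt_min S hiS)
  refine ⟨j₀, fun j hj => ?_, ?_⟩
  · have : j ∉ S := fun hmem => (wellFounded_lt (α := ι)).not_lt_min S hmem hj
    exact (not_not.mp (fun hne => this hne)).symm
  · subst hj₀i
    exact hiup (ofLex y j₀)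

end ProductAux

/-- Let `ι` be a linearly ordered set whose order is well-founded, and for
each `i` let `H i` act on `Λ i` by an orientation-preserving affine action. Then the
componentwise action of `∀ i, H i` on the lexicographically ordered product `Lex (∀ i, Λ i)`
is an orientation-preserving affine action, which is free (resp. everywhere rigid,
essentially free) whenever all the given actions are. -/
theorem product_affineAction (ι : Type*) [LinearOrder ι] [WellFoundedLT ι]
    (Λ : ι → Type*) [∀ i, AddCommGroup (Λ i)] [∀ i, LinearOrder (Λ i)]
    [∀ i, IsOrderedAddMonoid (Λ i)]
    (H : ι → Type*) [∀ i, Group (H i)]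
    (ρ : ∀ i, H i →* OPAffineAut (Λ i)) :
    ∃ ρbar : (∀ i, H i) →* OPAffineAut (Lex (∀ i, Λ i)),
      (∀ (h : ∀ i, H i) (x : ∀ i, Λ i) (i : ι),
        ofLex (ρbar h (toLex x)) i = (ρ i) (h i) (x i)) ∧
      ((∀ i, AffineActionFree (ρ i)) → AffineActionFree ρbar) ∧
      ((∀ i, ∀ g : H i, ((ρ i) g).Rigid) → ∀ h : ∀ i, H i, (ρbar h).Rigid) ∧
      ((∀ i, AffineActionEssentiallyFree (ρ i)) → AffineActionEssentiallyFree ρbar) := by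
  classical
  refine ⟨{ toFun := fun h => OPAffineAut.piLex fun i => ρ i (h i)
            map_one' := OPAffineAut.ext' fun x => congrArg toLex (funext fun i =>
              show (ρ i (1 : H i)) (ofLex x i) = ofLex x i by rw [map_one]; rfl)
            map_mul' := fun a b => OPAffineAut.ext' fun x => congrArg toLex (funext fun i =>
              show (ρ i (a i * b i)) (ofLex x i) = (ρ i (a i)) ((ρ i (b i)) (ofLex x i)) by
                rw [map_mul]; rfl) }, fun h x i => rfl, ?_, ?_, ?_⟩
  · -- free
    intro hfree h hne x hx
    obtain ⟨i, hi⟩ := Function.ne_iff.mp hne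
    exact hfree i (h i) hi (ofLex x i) (congrFun (congrArg ofLex hx) i)
  · -- rigid
    intro hrig h ε hε hex y
    rcases hε with rfl | rfl
    · rw [zpow_one] at hex ⊢
      exact OPAffineAut.piLex_rigid_aux (fun i => ρ i (h i))
        (fun i => hrig i (h i)) hex y
    · rw [zpow_neg_one, ← map_inv] at hex ⊢
      exact OPAffineAut.piLex_rigid_aux (fun i => ρ i (h⁻¹ i))
        (fun i => hrig i (h⁻¹ i)) hex y
  · -- essentially free
    intro hess h hne
    have hrig : ∀ i (g : H i), ((ρ i) g).Rigid := fun i g => by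
      by_cases hg : g = 1
      · subst hg; rw [map_one]; exact OPAffineAut.one_rigid
      · exact (hess i g hg).1
    constructor
    · intro ε hε hex y
      rcases hε with rfl | rfl
      · rw [zpow_one] at hex ⊢
        exact OPAffineAut.piLex_rigid_aux (fun i => ρ i (h i))
          (fun i => hrig i (h i)) hex y
      · rw [zpow_neg_one, ← map_inv] at hex ⊢
        exact OPAffineAut.piLex_rigid_aux (fun i => ρ i (h⁻¹ i))
          (fun i => hrig i (h⁻¹ i)) hex y
    · intro x hx
      obtain ⟨i, hi⟩ := Function.ne_iff.mp hne
      exact (hess i (h i) hi).2 (ofLex x i) (congrFun (congrArg ofLex hx) i)
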